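/- For the cycle code C_m under IID bit-flip noise with rate p < 1/2 and bias ε defined by 2p(1−p) = 1/2 − ε, the edge-by-edge majority-vote decoder recovers the full error vector except with probability at most 2m²·exp(−2ε²m). -/

import Mathlib

open MeasureTheory ProbabilityTheory

/-- The edges of the complete graph `K_m`: ordered pairs `(i, j)` with `i < j`. -/
abbrev KEdge (m : ℕ) := {q : Fin m × Fin m // q.1 < q.2}

/-- The bit of an edge-configuration on the unordered pair `{i, j}`. -/
def pairBit {m : ℕ} (c : KEdge m → ZMod 2) (i j : Fin m) : ZMod 2 :=
  if h : i < j then c ⟨(i, j), h⟩ else if h' : j < i then c ⟨(j, i), h'⟩ else 0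

/-- The majority-vote decoder of the cycle code for the edge `(i, j)`: it computes the
`m - 2` triangle syndromes through `(i, j)` and outputs `1` exactly when more than `m/2`
of them are `1`. -/
noncomputable def cycleMajority {m : ℕ} (c : KEdge m → ZMod 2) (i j : Fin m) : ZMod 2 :=
  if ((Finset.univ.filter fun l : Fin m =>
        l ≠ i ∧ l ≠ j ∧ pairBit c i j + pairBit c i l + pairBit c j l = 1).card : ℝ) ≤
      (m : ℝ) / 2
  then 0 else 1

set_option linter.unusedSectionVars false
set_option linter.unusedVariables false

namespace CycleAux


variable {m : ℕ}

def ked (a b : Fin m) (h : a ≠ b) : KEdge m :=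
  if hab : a < b then ⟨(a, b), hab⟩ else ⟨(b, a), (h.lt_or_gt.resolve_left hab)⟩

lemma pairBit_ked (c : KEdge m → ZMod 2) {a b : Fin m} (h : a ≠ b) :
    pairBit c a b = c (ked a b h) := by
  by_cases hab : a < b
  · simp [pairBit, ked, hab]
  · have hba : b < a := h.lt_or_gt.resolve_left hab
    simp [pairBit, ked, hab, hba, asymm hba]

lemma ked_eq_elim {a b c d : Fin m} {hab : a ≠ b} {hcd : c ≠ d}
    (h : ked a b hab = ked c d hcd) : (a = c ∧ b = d) ∨ (a = d ∧ b = c) := by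
  unfold ked at h
  split_ifs at h <;>
    (simp only [Subtype.mk.injEq, Prod.mk.injEq] at h; tauto)

lemma ked_ne {a b c d : Fin m} (hab : a ≠ b) (hcd : c ≠ d)
    (h1 : ¬(a = c ∧ b = d)) (h2 : ¬(a = d ∧ b = c)) : ked a b hab ≠ ked c d hcd := by
  intro h
  rcases ked_eq_elim h with h' | h' <;> tauto

lemma ked_ij {i j : Fin m} (hij : i < j) :
    ked i j (ne_of_lt hij) = ⟨(i, j), hij⟩ := by simp [ked, hij]

lemma pairBit_zero (a b : Fin m) : pairBit (fun _ => (0 : ZMod 2)) a b = 0 := by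
  unfold pairBit; split_ifs <;> rfl

lemma zmod2_cases (x : ZMod 2) : x = 0 ∨ x = 1 := by revert x; decide

def Tset (i j : Fin m) : Finset (Fin m) := Finset.univ.filter fun l => l ≠ i ∧ l ≠ j

lemma card_Tset {i j : Fin m} (h : i ≠ j) : (Tset i j).card = m - 2 := by
  classical
  have : Tset i j = (Finset.univ : Finset (Fin m)) \ {i, j} := by
    ext l; simp [Tset, and_comm]
  rw [this, Finset.card_sdiff_of_subset (by simp)]
  rw [Finset.card_insert_of_notMem (by simpa using h), Finset.card_singleton]
  simp

noncomputable def vote (i j : Fin m) (c : KEdge m → ZMod 2) (l : Fin m) : ℝ :=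
  if pairBit c i l + pairBit c j l = 1 then 1 else 0

noncomputable def zed (i j : Fin m) (c : KEdge m → ZMod 2) : ℝ :=
  if pairBit c i j = 1 then 2 else 0

noncomputable def Wsum (i j : Fin m) (c : KEdge m → ZMod 2) : ℝ :=
  (∑ l ∈ Tset i j, vote i j c l) + zed i j c

lemma sum_vote_eq_card (i j : Fin m) (c : KEdge m → ZMod 2) :
    (∑ l ∈ Tset i j, vote i j c l) =
      ((Finset.univ.filter fun l : Fin m =>
        l ≠ i ∧ l ≠ j ∧ pairBit c i l + pairBit c j l = 1).card : ℝ) := by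
  classical
  simp only [vote]
  rw [Finset.sum_boole]
  congr 1
  rw [Tset, Finset.filter_filter]
  congr 1
  ext l
  simp [and_assoc]

lemma fail_le_Wsum {i j : Fin m} (hij : i < j) (c : KEdge m → ZMod 2)
    (hfail : cycleMajority c i j ≠ pairBit c i j) : (m : ℝ) / 2 ≤ Wsum i j c := by
  classical
  have hij' : i ≠ j := ne_of_lt hij
  rcases zmod2_cases (pairBit c i j) with hb | hb
  · have hKN : (Finset.univ.filter fun l : Fin m =>
        l ≠ i ∧ l ≠ j ∧ pairBit c i j + pairBit c i l + pairBit c j l = 1)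
        = (Finset.univ.filter fun l : Fin m =>
        l ≠ i ∧ l ≠ j ∧ pairBit c i l + pairBit c j l = 1) := by
      apply Finset.filter_congr; intro l _
      rw [hb, zero_add]
    have hmaj : ¬ (((Finset.univ.filter fun l : Fin m =>
        l ≠ i ∧ l ≠ j ∧ pairBit c i j + pairBit c i l + pairBit c j l = 1).card : ℝ)
          ≤ (m : ℝ) / 2) := by
      intro hle
      apply hfail
      rw [hb]; unfold cycleMajority; rw [if_pos hle]
    rw [hKN] at hmaj
    have hz : zed i j c = 0 := by
      unfold zed; rw [hb]; simp
    rw [Wsum, sum_vote_eq_card, hz, add_zero]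
    linarith [not_le.mp hmaj]
  · have hmaj : (((Finset.univ.filter fun l : Fin m =>
        l ≠ i ∧ l ≠ j ∧ pairBit c i j + pairBit c i l + pairBit c j l = 1).card : ℝ)
          ≤ (m : ℝ) / 2) := by
      by_contra hle
      apply hfail
      rw [hb]; unfold cycleMajority; rw [if_neg hle]
    have hKN : (Finset.univ.filter fun l : Fin m =>
          l ≠ i ∧ l ≠ j ∧ pairBit c i j + pairBit c i l + pairBit c j l = 1).card
        + (Finset.univ.filter fun l : Fin m =>
          l ≠ i ∧ l ≠ j ∧ pairBit c i l + pairBit c j l = 1).card = m - 2 := by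
      rw [← card_Tset hij']
      have h1 : ∀ l : Fin m, (l ≠ i ∧ l ≠ j ∧ pairBit c i j + pairBit c i l + pairBit c j l = 1)
          ↔ (l ≠ i ∧ l ≠ j) ∧ ¬(pairBit c i l + pairBit c j l = 1) := by
        intro l
        rw [hb]
        constructor
        · rintro ⟨h1, h2, h3⟩
          refine ⟨⟨h1, h2⟩, ?_⟩
          intro h4; rw [add_assoc, h4] at h3; revert h3; decide
        · rintro ⟨⟨h1, h2⟩, h3⟩
          refine ⟨h1, h2, ?_⟩
          rcases zmod2_cases (pairBit c i l + pairBit c j l) with h5 | h5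
          · rw [add_assoc, h5]; rfl
          · exact absurd h5 h3
      have h2 : ∀ l : Fin m, (l ≠ i ∧ l ≠ j ∧ pairBit c i l + pairBit c j l = 1)
          ↔ (l ≠ i ∧ l ≠ j) ∧ (pairBit c i l + pairBit c j l = 1) := by
        intro l; tauto
      rw [Finset.filter_congr (fun l _ => h1 l), Finset.filter_congr (fun l _ => h2 l)]
      rw [← Finset.filter_filter, ← Finset.filter_filter (fun l : Fin m => l ≠ i ∧ l ≠ j)]
      rw [add_comm]
      exact Finset.card_filter_add_card_filter_not _
    have hz : zed i j c = 2 := by unfold zed; rw [hb]; simp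
    have h2m : 2 ≤ m := by
      have h := j.isLt
      have h' : (i : ℕ) < (j : ℕ) := hij
      omega
    have hcast : ((Finset.univ.filter fun l : Fin m =>
          l ≠ i ∧ l ≠ j ∧ pairBit c i j + pairBit c i l + pairBit c j l = 1).card : ℝ)
        + ((Finset.univ.filter fun l : Fin m =>
          l ≠ i ∧ l ≠ j ∧ pairBit c i l + pairBit c j l = 1).card : ℝ) = (m : ℝ) - 2 := by
      have h3 := congrArg (Nat.cast : ℕ → ℝ) hKN
      push_cast [Nat.cast_sub h2m] at h3
      linarith
    rw [Wsum, sum_vote_eq_card, hz]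
    linarith

lemma cycleMajority_zero (i j : Fin m) :
    cycleMajority (fun _ => (0 : ZMod 2)) i j = 0 := by
  classical
  have hempty : (Finset.univ.filter fun l : Fin m =>
      l ≠ i ∧ l ≠ j ∧ pairBit (fun _ => (0:ZMod 2)) i j + pairBit (fun _ => (0:ZMod 2)) i l
        + pairBit (fun _ => (0:ZMod 2)) j l = 1) = ∅ := by
    rw [Finset.filter_eq_empty_iff]
    intro l _
    simp [pairBit_zero, show ((0:ZMod 2) + 0 + 0 ≠ 1) from by decide]
  have hle : (((∅ : Finset (Fin m)).card : ℝ)) ≤ (m : ℝ) / 2 := by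
    simp
    positivity
  unfold cycleMajority
  rw [hempty, if_pos hle]

lemma card_KEdge_le : 2 * Fintype.card (KEdge m) ≤ m * m := by
  classical
  rw [Fintype.card_subtype]
  have hswap : (Finset.univ.filter fun q : Fin m × Fin m => q.1 < q.2).card
      = (Finset.univ.filter fun q : Fin m × Fin m => q.2 < q.1).card := by
    apply Finset.card_bij' (fun q _ => (q.2, q.1)) (fun q _ => (q.2, q.1)) <;> simp
  have hdis : Disjoint (Finset.univ.filter fun q : Fin m × Fin m => q.1 < q.2)
      (Finset.univ.filter fun q : Fin m × Fin m => q.2 < q.1) := by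
    rw [Finset.disjoint_left]
    intro q h1 h2
    simp only [Finset.mem_filter] at h1 h2
    exact absurd h2.2 (asymm h1.2)
  calc 2 * (Finset.univ.filter fun q : Fin m × Fin m => q.1 < q.2).card
      = (Finset.univ.filter fun q : Fin m × Fin m => q.1 < q.2).card
        + (Finset.univ.filter fun q : Fin m × Fin m => q.2 < q.1).card := by
        rw [← hswap]; ring
    _ = ((Finset.univ.filter fun q : Fin m × Fin m => q.1 < q.2)
        ∪ (Finset.univ.filter fun q : Fin m × Fin m => q.2 < q.1)).card := by
        rw [Finset.card_union_of_disjoint hdis]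
    _ ≤ Fintype.card (Fin m × Fin m) := Finset.card_le_univ _
    _ = m * m := by simp


lemma real_key (p ε : ℝ) (m : ℕ) (hm : 3 ≤ m) (hε0 : 0 < ε) (hε2 : ε < 1/2)
    (hp0 : 0 ≤ p) (hpe : 2*p ≤ 1 - 2*ε) :
    Real.exp (-Real.log ((1+2*ε)/(1-2*ε)) * ((m:ℝ)/2)) *
      ((1+2*ε) ^ (m-2) * (p * Real.exp (2 * Real.log ((1+2*ε)/(1-2*ε))) + (1-p)))
      ≤ Real.exp (-2*ε^2*((m:ℝ)-2)) := by
  set u : ℝ := 1 + 2*ε with hu_def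
  set v : ℝ := 1 - 2*ε with hv_def
  have hu : 0 < u := by rw [hu_def]; linarith
  have hv : 0 < v := by rw [hv_def]; linarith
  have hd : 0 < u / v := div_pos hu hv
  have hn : ((m - 2 : ℕ) : ℝ) = (m : ℝ) - 2 := by
    rw [Nat.cast_sub (by omega)]; norm_num
  have hexp2 : Real.exp (2 * Real.log (u/v)) = (u/v) * (u/v) := by
    rw [two_mul, Real.exp_add, Real.exp_log hd]
  -- the bracket bound
  have hbracket : p * Real.exp (2 * Real.log (u/v)) + (1 - p) ≤ (u*v)/v^2 := by
    rw [hexp2]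
    have key : p*u^2 + (1-p)*v^2 ≤ u*v := by
      have h2 : u*v - (p*u^2 + (1-p)*v^2) = 4*ε*(1 - 2*ε - 2*p) := by
        rw [hu_def, hv_def]; ring
      nlinarith [mul_nonneg hε0.le (by linarith : (0:ℝ) ≤ 1 - 2*ε - 2*p)]
    have e1 : p * ((u/v) * (u/v)) + (1 - p) = (p*u^2 + (1-p)*v^2)/v^2 := by
      field_simp
    rw [e1]
    exact (div_le_div_iff_of_pos_right (by positivity : (0:ℝ) < v^2)).mpr key
  have hm3 : (3:ℝ) ≤ (m:ℝ) := by exact_mod_cast hm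
  have hAUC : Real.exp (-Real.log (u/v) * ((m:ℝ)/2)) * (u^(m-2) * ((u*v)/v^2))
      = Real.exp ((Real.log u + Real.log v) * ((m:ℝ)/2 - 1)) := by
    have l1 : Real.log (u/v) = Real.log u - Real.log v := Real.log_div hu.ne' hv.ne'
    have l2 : u^(m-2) = Real.exp (((m:ℝ)-2) * Real.log u) := by
      conv_lhs => rw [← Real.exp_log hu]
      rw [← Real.exp_nat_mul, hn]
    have l3 : (u*v)/v^2 = Real.exp (Real.log u - Real.log v) := by
      rw [Real.exp_sub, Real.exp_log hu, Real.exp_log hv]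
      field_simp
    rw [l1, l2, l3, ← Real.exp_add, ← Real.exp_add]
    congr 1
    ring
  calc Real.exp (-Real.log (u/v) * ((m:ℝ)/2)) *
        (u ^ (m-2) * (p * Real.exp (2 * Real.log (u/v)) + (1-p)))
      ≤ Real.exp (-Real.log (u/v) * ((m:ℝ)/2)) * (u^(m-2) * ((u*v)/v^2)) := by
        have h2 : (0:ℝ) ≤ Real.exp (-Real.log (u/v) * ((m:ℝ)/2)) := (Real.exp_pos _).le
        have h3 : (0:ℝ) ≤ u^(m-2) := by positivity
        exact mul_le_mul_of_nonneg_left (mul_le_mul_of_nonneg_left hbracket h3) h2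
    _ = Real.exp ((Real.log u + Real.log v) * ((m:ℝ)/2 - 1)) := hAUC
    _ ≤ Real.exp (-2*ε^2*((m:ℝ)-2)) := by
        rw [Real.exp_le_exp]
        have hlog : Real.log u + Real.log v ≤ -(4*ε^2) := by
          rw [← Real.log_mul hu.ne' hv.ne']
          rw [Real.log_le_iff_le_exp (by positivity)]
          have : u * v = -(4*ε^2) + 1 := by rw [hu_def, hv_def]; ring
          rw [this]
          exact Real.add_one_le_exp _
        have hM : (0:ℝ) ≤ (m:ℝ)/2 - 1 := by linarith
        calc (Real.log u + Real.log v) * ((m:ℝ)/2 - 1)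
            ≤ (-(4*ε^2)) * ((m:ℝ)/2 - 1) := mul_le_mul_of_nonneg_right hlog hM
          _ = -2*ε^2*((m:ℝ)-2) := by ring


section ProbAux
variable {m : ℕ} {Ω : Type*} [MeasureSpace Ω] [IsProbabilityMeasure (ℙ : Measure Ω)]
 [MeasureSpace Ω] [IsProbabilityMeasure (ℙ : Measure Ω)]

variable {f : KEdge m → Ω → ZMod 2}

def Fc (f : KEdge m → Ω → ZMod 2) (ω : Ω) : KEdge m → ZMod 2 := fun e => f e ω

lemma measurable_Fc (hmeas : ∀ e, Measurable (f e)) : Measurable (Fc f) :=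
  measurable_pi_lambda _ hmeas

lemma measurable_comp_Fc (hmeas : ∀ e, Measurable (f e)) (φ : (KEdge m → ZMod 2) → ℝ) :
    Measurable (fun ω => φ (Fc f ω)) :=
  (measurable_of_countable φ).comp (measurable_Fc hmeas)

lemma integrable_comp_Fc (hmeas : ∀ e, Measurable (f e)) (φ : (KEdge m → ZMod 2) → ℝ) :
    Integrable (fun ω => φ (Fc f ω)) ℙ := by
  refine (integrable_const (∑ c : KEdge m → ZMod 2, |φ c|)).mono'
    (measurable_comp_Fc hmeas φ).aestronglyMeasurable (Filter.Eventually.of_forall fun ω => ?_)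
  rw [Real.norm_eq_abs]
  exact Finset.single_le_sum (f := fun c => |φ c|) (fun c _ => abs_nonneg _)
    (Finset.mem_univ (Fc f ω))

lemma indep_comp_Fc (hindep : iIndepFun f ℙ)
    (hmeas : ∀ e, Measurable (f e)) (φ ψ : (KEdge m → ZMod 2) → ℝ) (S : Finset (KEdge m))
    (hφ : ∀ c c', (∀ x ∈ S, c x = c' x) → φ c = φ c')
    (hψ : ∀ c c', (∀ x ∉ S, c x = c' x) → ψ c = ψ c') :
    IndepFun (fun ω => φ (Fc f ω)) (fun ω => ψ (Fc f ω)) ℙ := by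
  classical
  have h := hindep.indepFun_finset S Sᶜ disjoint_compl_right hmeas
  have h2 := h.comp
    (φ := fun y : (x : S) → ZMod 2 => φ (fun x => if hx : x ∈ S then y ⟨x, hx⟩ else 0))
    (ψ := fun y : (x : (Sᶜ : Finset (KEdge m))) → ZMod 2 =>
      ψ (fun x => if hx : x ∈ (Sᶜ : Finset (KEdge m)) then y ⟨x, hx⟩ else 0))
    (measurable_of_countable _) (measurable_of_countable _)
  convert h2 using 1
  · funext ω
    exact hφ _ _ (fun x hx => by simp [Function.comp, hx, Fc])
  · funext ω
    refine hψ _ _ (fun x hx => ?_)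
    have hx' : x ∈ (Sᶜ : Finset (KEdge m)) := Finset.mem_compl.mpr hx
    simp [Function.comp, hx', Fc]

lemma integral_ite_exp (P : Ω → Prop) [DecidablePred P] (hA : MeasurableSet {ω | P ω})
    (x y : ℝ) :
    ∫ ω, (if P ω then x else y) ∂ℙ = (x - y) * (ℙ {ω | P ω}).toReal + y := by
  have hfun : (fun ω => if P ω then x else y)
      = fun ω => ({ω | P ω} : Set Ω).indicator (fun _ => x - y) ω + y := by
    funext ω
    by_cases h : P ω <;> simp [Set.indicator, h]
  rw [hfun, integral_add ((integrable_const (x - y)).indicator hA) (integrable_const y)]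
  rw [integral_indicator_const _ hA, integral_const]
  simp [mul_comm, measureReal_def]

lemma prob_zero (hmeas : ∀ e, Measurable (f e)) {p : ℝ} (hp0 : 0 ≤ p) (hp1 : p ≤ 1)
    (hflip : ∀ e, ℙ {ω | f e ω = 1} = ENNReal.ofReal p) (e : KEdge m) :
    ℙ {ω | f e ω = 0} = ENNReal.ofReal (1 - p) := by
  have hc : {ω | f e ω = 0} = {ω | f e ω = 1}ᶜ := by
    ext ω
    simp only [Set.mem_setOf_eq, Set.mem_compl_iff]
    constructor
    · intro h h'; rw [h] at h'; exact absurd h' (by decide)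
    · intro h
      rcases (show ∀ x : ZMod 2, x = 0 ∨ x = 1 from by decide) (f e ω) with h' | h'
      · exact h'
      · exact absurd h' h
  have hA : MeasurableSet {ω | f e ω = 1} := (hmeas e) (measurableSet_singleton 1)
  rw [hc, prob_compl_eq_one_sub hA, hflip e]
  rw [ENNReal.ofReal_sub 1 hp0, ENNReal.ofReal_one]

lemma meas_sum_one (hmeas : ∀ e, Measurable (f e)) (a b : KEdge m) :
    MeasurableSet {ω | f a ω + f b ω = 1} := by
  have h : Measurable (fun ω => f a ω + f b ω) :=
    (measurable_of_countable (fun q : ZMod 2 × ZMod 2 => q.1 + q.2)).comp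
      ((hmeas a).prodMk (hmeas b))
  exact h (measurableSet_singleton 1)

lemma prob_vote_one (hindep : iIndepFun f ℙ)
    (hmeas : ∀ e, Measurable (f e)) {p : ℝ} (hp0 : 0 ≤ p) (hp1 : p ≤ 1)
    (hflip : ∀ e, ℙ {ω | f e ω = 1} = ENNReal.ofReal p) (a b : KEdge m) (hab : a ≠ b) :
    ℙ {ω | f a ω + f b ω = 1} = ENNReal.ofReal (2 * p * (1 - p)) := by
  classical
  have hsplit : {ω | f a ω + f b ω = 1}
      = ((f a) ⁻¹' {0} ∩ (f b) ⁻¹' {1}) ∪ ((f a) ⁻¹' {1} ∩ (f b) ⁻¹' {0}) := by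
    ext ω
    simp only [Set.mem_setOf_eq, Set.mem_union, Set.mem_inter_iff, Set.mem_preimage,
      Set.mem_singleton_iff]
    exact (show ∀ x y : ZMod 2, (x + y = 1) ↔ (x = 0 ∧ y = 1) ∨ (x = 1 ∧ y = 0) from by decide)
      (f a ω) (f b ω)
  have hIF : IndepFun (f a) (f b) ℙ := hindep.indepFun hab
  have h1 := hIF.measure_inter_preimage_eq_mul {(0 : ZMod 2)} {(1 : ZMod 2)}
    (measurableSet_singleton _) (measurableSet_singleton _)
  have h2 := hIF.measure_inter_preimage_eq_mul {(1 : ZMod 2)} {(0 : ZMod 2)}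
    (measurableSet_singleton _) (measurableSet_singleton _)
  have hpre1 : ∀ e : KEdge m, (f e) ⁻¹' {(1 : ZMod 2)} = {ω | f e ω = 1} := fun _ => rfl
  have hpre0 : ∀ e : KEdge m, (f e) ⁻¹' {(0 : ZMod 2)} = {ω | f e ω = 0} := fun _ => rfl
  have hdisj : Disjoint ((f a) ⁻¹' {(0:ZMod 2)} ∩ (f b) ⁻¹' {1})
      ((f a) ⁻¹' {(1:ZMod 2)} ∩ (f b) ⁻¹' {0}) := by
    rw [Set.disjoint_left]
    rintro ω ⟨h01, _⟩ ⟨h10, _⟩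
    simp only [Set.mem_preimage, Set.mem_singleton_iff] at h01 h10
    rw [h01] at h10; exact absurd h10 (by decide)
  have hmeasset : MeasurableSet ((f a) ⁻¹' {(1:ZMod 2)} ∩ (f b) ⁻¹' {0}) :=
    ((hmeas a) (measurableSet_singleton _)).inter ((hmeas b) (measurableSet_singleton _))
  rw [hsplit, measure_union hdisj hmeasset, h1, h2]
  rw [hpre1, hpre0, hpre1 a, hpre0 b]
  rw [hflip, hflip, prob_zero hmeas hp0 hp1 hflip, prob_zero hmeas hp0 hp1 hflip]
  rw [← ENNReal.ofReal_mul (by linarith), ← ENNReal.ofReal_mul hp0, ← ENNReal.ofReal_add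
    (by nlinarith) (by nlinarith)]
  congr 1
  ring


end ProbAux

section PerEdge

variable {m : ℕ} {Ω : Type*} [MeasureSpace Ω] [IsProbabilityMeasure (ℙ : Measure Ω)]
variable {f : KEdge m → Ω → ZMod 2}

noncomputable def gfun (i j : Fin m) (t : ℝ) (l : Fin m) : (KEdge m → ZMod 2) → ℝ :=
  fun c => Real.exp (t * vote i j c l)

noncomputable def hfun (i j : Fin m) (t : ℝ) : (KEdge m → ZMod 2) → ℝ :=
  fun c => Real.exp (t * zed i j c)

lemma vote_congr {i j l : Fin m} (hli : i ≠ l) (hlj : j ≠ l) {c c' : KEdge m → ZMod 2}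
    (h1 : c (ked i l hli) = c' (ked i l hli)) (h2 : c (ked j l hlj) = c' (ked j l hlj)) :
    vote i j c l = vote i j c' l := by
  unfold vote
  rw [pairBit_ked c hli, pairBit_ked c hlj, pairBit_ked c' hli, pairBit_ked c' hlj, h1, h2]

lemma zed_congr {i j : Fin m} (hij : i ≠ j) {c c' : KEdge m → ZMod 2}
    (h1 : c (ked i j hij) = c' (ked i j hij)) : zed i j c = zed i j c' := by
  unfold zed
  rw [pairBit_ked c hij, pairBit_ked c' hij, h1]

lemma integral_gfun (hmeas : ∀ e, Measurable (f e))
    (hindep : iIndepFun f ℙ) {p : ℝ} (hp0 : 0 ≤ p) (hp1 : p ≤ 1)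
    (hflip : ∀ e, ℙ {ω | f e ω = 1} = ENNReal.ofReal p)
    (t : ℝ) {i j l : Fin m} (hij : i ≠ j) (hli : i ≠ l) (hlj : j ≠ l) :
    ∫ ω, gfun i j t l (Fc f ω) ∂ℙ
      = 2*p*(1-p) * Real.exp t + (1 - 2*p*(1-p)) := by
  have hab : ked i l hli ≠ ked j l hlj :=
    ked_ne hli hlj (fun h => hij h.1) (fun h => hli h.1)
  have hfuneq : (fun ω => gfun i j t l (Fc f ω))
      = fun ω => if (f (ked i l hli) ω + f (ked j l hlj) ω = 1)
          then Real.exp (t*1) else Real.exp (t*0) := by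
    funext ω
    unfold gfun vote
    rw [pairBit_ked (Fc f ω) hli, pairBit_ked (Fc f ω) hlj,
      apply_ite (fun x : ℝ => Real.exp (t*x))]
    rfl
  rw [hfuneq, integral_ite_exp (fun ω => f (ked i l hli) ω + f (ked j l hlj) ω = 1)
    (meas_sum_one hmeas _ _) _ _]
  rw [prob_vote_one hindep hmeas hp0 hp1 hflip _ _ hab]
  rw [ENNReal.toReal_ofReal (by nlinarith)]
  rw [mul_one, mul_zero, Real.exp_zero]
  ring

lemma integral_hfun (hmeas : ∀ e, Measurable (f e)) {p : ℝ} (hp0 : 0 ≤ p)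
    (hflip : ∀ e, ℙ {ω | f e ω = 1} = ENNReal.ofReal p)
    (t : ℝ) {i j : Fin m} (hij : i < j) :
    ∫ ω, hfun i j t (Fc f ω) ∂ℙ = p * Real.exp (2*t) + (1 - p) := by
  have hfuneq : (fun ω => hfun i j t (Fc f ω))
      = fun ω => if (f (ked i j (ne_of_lt hij)) ω = 1)
          then Real.exp (t*2) else Real.exp (t*0) := by
    funext ω
    unfold hfun zed
    rw [pairBit_ked (Fc f ω) (ne_of_lt hij), apply_ite (fun x : ℝ => Real.exp (t*x))]
    rfl
  rw [hfuneq, integral_ite_exp (fun ω => f (ked i j (ne_of_lt hij)) ω = 1)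
    ((hmeas _) (measurableSet_singleton 1)) _ _]
  rw [hflip, ENNReal.toReal_ofReal hp0, mul_zero, Real.exp_zero]
  have : t * 2 = 2 * t := by ring
  rw [this]
  ring

lemma integral_prod_gfun (hmeas : ∀ e, Measurable (f e))
    (hindep : iIndepFun f ℙ) (t : ℝ) {i j : Fin m} (hij : i < j)
    (s : Finset (Fin m)) (hs : s ⊆ Tset i j) :
    ∫ ω, (∏ l ∈ s, gfun i j t l (Fc f ω)) * hfun i j t (Fc f ω) ∂ℙ
      = (∏ l ∈ s, ∫ ω, gfun i j t l (Fc f ω) ∂ℙ) * ∫ ω, hfun i j t (Fc f ω) ∂ℙ := by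
  classical
  have hij' : i ≠ j := ne_of_lt hij
  induction s using Finset.induction_on with
  | empty => simp
  | @insert l₀ s hl₀ ih =>
    have hl₀T : l₀ ∈ Tset i j := hs (Finset.mem_insert_self _ _)
    have hsT : s ⊆ Tset i j := fun x hx => hs (Finset.mem_insert_of_mem hx)
    have hl₀i : i ≠ l₀ := by
      have := (Finset.mem_filter.mp hl₀T).2.1
      exact this.symm
    have hl₀j : j ≠ l₀ := by
      have := (Finset.mem_filter.mp hl₀T).2.2
      exact this.symm
    set S : Finset (KEdge m) := {ked i l₀ hl₀i, ked j l₀ hl₀j} with hS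
    have hIndep : IndepFun (fun ω => gfun i j t l₀ (Fc f ω))
        (fun ω => (∏ l ∈ s, gfun i j t l (Fc f ω)) * hfun i j t (Fc f ω)) ℙ := by
      refine indep_comp_Fc hindep hmeas (gfun i j t l₀)
        (fun c => (∏ l ∈ s, gfun i j t l c) * hfun i j t c) S ?_ ?_
      · intro c c' hcc
        unfold gfun
        rw [vote_congr hl₀i hl₀j
          (hcc _ (by simp [hS])) (hcc _ (by simp [hS]))]
      · intro c c' hcc
        have hnotS : ∀ x : KEdge m, x ≠ ked i l₀ hl₀i → x ≠ ked j l₀ hl₀j → c x = c' x := by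
          intro x h1 h2
          exact hcc x (by simp [hS, h1, h2])
        have hP : (∏ l ∈ s, gfun i j t l c) = ∏ l ∈ s, gfun i j t l c' := by
          refine Finset.prod_congr rfl (fun l hl => ?_)
          have hlT : l ∈ Tset i j := hsT hl
          have hli : i ≠ l := ((Finset.mem_filter.mp hlT).2.1).symm
          have hlj : j ≠ l := ((Finset.mem_filter.mp hlT).2.2).symm
          have hll₀ : l ≠ l₀ := fun h => hl₀ (h ▸ hl)
          unfold gfun
          rw [vote_congr hli hlj
            (hnotS _ (ked_ne hli hl₀i (fun h => hll₀ h.2) (fun h => hli h.2.symm))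
              (ked_ne hli hl₀j (fun h => hij' h.1) (fun h => hl₀i h.1)))
            (hnotS _ (ked_ne hlj hl₀i (fun h => hij' h.1.symm) (fun h => hl₀j h.1))
              (ked_ne hlj hl₀j (fun h => hll₀ h.2) (fun h => hl₀j h.1)))]
        have hH : hfun i j t c = hfun i j t c' := by
          unfold hfun
          rw [zed_congr hij'
            (hnotS _ (ked_ne hij' hl₀i (fun h => hl₀j h.2) (fun h => hl₀i h.1))
              (ked_ne hij' hl₀j (fun h => hij' h.1) (fun h => hl₀i h.1)))]
        show (∏ l ∈ s, gfun i j t l c) * hfun i j t c = (∏ l ∈ s, gfun i j t l c') * hfun i j t c'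
        rw [hP, hH]
    have step : ∫ ω, (∏ l ∈ insert l₀ s, gfun i j t l (Fc f ω)) * hfun i j t (Fc f ω) ∂ℙ
        = (∫ ω, gfun i j t l₀ (Fc f ω) ∂ℙ) *
          ∫ ω, (∏ l ∈ s, gfun i j t l (Fc f ω)) * hfun i j t (Fc f ω) ∂ℙ := by
      have hfeq : (fun ω => (∏ l ∈ insert l₀ s, gfun i j t l (Fc f ω)) * hfun i j t (Fc f ω))
          = fun ω => (gfun i j t l₀ (Fc f ω)) *
              ((∏ l ∈ s, gfun i j t l (Fc f ω)) * hfun i j t (Fc f ω)) := by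
        funext ω
        rw [Finset.prod_insert hl₀]
        ring
      rw [hfeq]
      exact hIndep.integral_fun_mul_eq_mul_integral
        (integrable_comp_Fc hmeas (gfun i j t l₀)).aestronglyMeasurable
        (integrable_comp_Fc hmeas (fun c => (∏ l ∈ s, gfun i j t l c) * hfun i j t c)).aestronglyMeasurable
    rw [step, ih hsT, Finset.prod_insert hl₀]
    ring

lemma per_edge (hmeas : ∀ e, Measurable (f e))
    (hindep : iIndepFun f ℙ)
    {p ε : ℝ} (hp0 : 0 < p) (hp : p < 1/2) (hε : 2*p*(1-p) = 1/2 - ε)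
    (hflip : ∀ e, ℙ {ω | f e ω = 1} = ENNReal.ofReal p)
    (hm : 3 ≤ m) {i j : Fin m} (hij : i < j) :
    ℙ {ω | cycleMajority (Fc f ω) i j ≠ f ⟨(i,j),hij⟩ ω}
      ≤ ENNReal.ofReal (Real.exp (-2*ε^2*((m:ℝ)-2))) := by
  have hp1 : p ≤ 1 := by linarith
  have hε0 : 0 < ε := by nlinarith
  have hε2 : ε < 1/2 := by nlinarith
  have hu : (0:ℝ) < 1+2*ε := by linarith
  have hv : (0:ℝ) < 1-2*ε := by linarith
  set t := Real.log ((1+2*ε)/(1-2*ε)) with ht_def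
  have ht : 0 ≤ t := Real.log_nonneg (by rw [le_div_iff₀ hv]; linarith)
  have hsub : {ω | cycleMajority (Fc f ω) i j ≠ f ⟨(i,j),hij⟩ ω}
      ⊆ {ω | (m:ℝ)/2 ≤ Wsum i j (Fc f ω)} := by
    intro ω hω
    refine fail_le_Wsum hij (Fc f ω) ?_
    simp only [Set.mem_setOf_eq] at hω
    rw [pairBit_ked (Fc f ω) (ne_of_lt hij), ked_ij hij]
    exact hω
  have hint : Integrable (fun ω => Real.exp (t * Wsum i j (Fc f ω))) ℙ :=
    integrable_comp_Fc hmeas (fun c => Real.exp (t * Wsum i j c))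
  have hcher := measure_ge_le_exp_mul_mgf (X := fun ω => Wsum i j (Fc f ω)) (μ := ℙ)
    ((m:ℝ)/2) ht hint
  have hmgf : mgf (fun ω => Wsum i j (Fc f ω)) ℙ t
      = (2*p*(1-p) * Real.exp t + (1 - 2*p*(1-p))) ^ (m-2)
        * (p * Real.exp (2*t) + (1-p)) := by
    have h1 : mgf (fun ω => Wsum i j (Fc f ω)) ℙ t
        = ∫ ω, (∏ l ∈ Tset i j, gfun i j t l (Fc f ω)) * hfun i j t (Fc f ω) ∂ℙ := by
      unfold mgf
      congr 1
      funext ω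
      unfold Wsum gfun hfun
      show Real.exp (t * ((∑ l ∈ Tset i j, vote i j (Fc f ω) l) + zed i j (Fc f ω))) = _
      rw [mul_add, Real.exp_add, Finset.mul_sum, Real.exp_sum]
    rw [h1, integral_prod_gfun hmeas hindep t hij _ (subset_refl _)]
    rw [integral_hfun hmeas hp0.le hflip t hij]
    have h2 : ∀ l ∈ Tset i j, ∫ ω, gfun i j t l (Fc f ω) ∂ℙ
        = 2*p*(1-p) * Real.exp t + (1 - 2*p*(1-p)) := by
      intro l hl
      exact integral_gfun hmeas hindep hp0.le hp1 hflip t (ne_of_lt hij)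
        ((Finset.mem_filter.mp hl).2.1).symm ((Finset.mem_filter.mp hl).2.2).symm
    rw [Finset.prod_congr rfl h2, Finset.prod_const, card_Tset (ne_of_lt hij)]
  have hqu : 2*p*(1-p) * Real.exp t + (1 - 2*p*(1-p)) = 1+2*ε := by
    rw [ht_def, Real.exp_log (div_pos hu hv), hε]
    field_simp
    ring
  have hkey := real_key p ε m hm hε0 hε2 hp0.le
    (by nlinarith [mul_nonneg hp0.le (by linarith : (0:ℝ) ≤ 1-2*p)])
  have hfinal : (ℙ {ω | (m:ℝ)/2 ≤ Wsum i j (Fc f ω)}).toReal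
      ≤ Real.exp (-2*ε^2*((m:ℝ)-2)) := by
    refine le_trans hcher ?_
    rw [hmgf, hqu, ht_def]
    exact hkey
  calc ℙ {ω | cycleMajority (Fc f ω) i j ≠ f ⟨(i,j),hij⟩ ω}
      ≤ ℙ {ω | (m:ℝ)/2 ≤ Wsum i j (Fc f ω)} := measure_mono hsub
    _ = ENNReal.ofReal ((ℙ {ω | (m:ℝ)/2 ≤ Wsum i j (Fc f ω)}).toReal) :=
        (ENNReal.ofReal_toReal (measure_ne_top _ _)).symm
    _ ≤ ENNReal.ofReal (Real.exp (-2*ε^2*((m:ℝ)-2))) := ENNReal.ofReal_le_ofReal hfinal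

end PerEdge

end CycleAux

open CycleAux in
/-- For the cycle code `C_m` under IID bit-flip noise of rate `p < 1/2` with bias `ε`
defined by `2p(1-p) = 1/2 - ε`, the edge-by-edge majority-vote decoder recovers the full
error vector except with probability at most `2m²·exp(-2ε²m)`. -/
theorem cycle_code_decoder_bound (p ε : ℝ) (hp0 : 0 ≤ p) (hp : p < 1 / 2)
    (hε : 2 * p * (1 - p) = 1 / 2 - ε) (m : ℕ) (hm : 3 ≤ m)
    {Ω : Type*} [MeasureSpace Ω] [IsProbabilityMeasure (ℙ : Measure Ω)]
    (f : KEdge m → Ω → ZMod 2) (hmeas : ∀ e, Measurable (f e))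
    (hindep : iIndepFun f ℙ)
    (hflip : ∀ e, ℙ {ω | f e ω = 1} = ENNReal.ofReal p) :
    ℙ {ω | ∃ e : KEdge m,
        cycleMajority (fun e' => f e' ω) e.1.1 e.1.2 ≠ f e ω} ≤
      ENNReal.ofReal (2 * m ^ 2 * Real.exp (-2 * ε ^ 2 * m)) := by
  classical
  have hbad : {ω | ∃ e : KEdge m, cycleMajority (fun e' => f e' ω) e.1.1 e.1.2 ≠ f e ω}
      = ⋃ e : KEdge m, {ω | cycleMajority (Fc f ω) e.1.1 e.1.2 ≠ f e ω} := by
    ext ω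
    simp only [Set.mem_setOf_eq, Set.mem_iUnion]
    exact Iff.rfl
  rw [hbad]
  by_cases hp0' : p = 0
  · have hsub : (⋃ e : KEdge m, {ω | cycleMajority (Fc f ω) e.1.1 e.1.2 ≠ f e ω})
        ⊆ ⋃ e : KEdge m, {ω | f e ω = 1} := by
      intro ω hω
      by_contra hno
      simp only [Set.mem_iUnion, not_exists, Set.mem_setOf_eq] at hno
      have hzero : Fc f ω = fun _ => (0 : ZMod 2) := by
        funext e
        rcases zmod2_cases (f e ω) with h | h
        · exact h
        · exact absurd h (hno e)
      rcases Set.mem_iUnion.mp hω with ⟨e, he⟩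
      simp only [Set.mem_setOf_eq] at he
      have h1 : f e ω = 0 := by
        rcases zmod2_cases (f e ω) with h | h
        · exact h
        · exact absurd h (hno e)
      rw [hzero, cycleMajority_zero, h1] at he
      exact he rfl
    calc ℙ (⋃ e : KEdge m, {ω | cycleMajority (Fc f ω) e.1.1 e.1.2 ≠ f e ω})
        ≤ ℙ (⋃ e : KEdge m, {ω | f e ω = 1}) := measure_mono hsub
      _ ≤ ∑' e : KEdge m, ℙ {ω | f e ω = 1} := measure_iUnion_le _
      _ = 0 := by simp [hflip, hp0']
      _ ≤ _ := zero_le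
  · have hp0'' : 0 < p := lt_of_le_of_ne hp0 (Ne.symm hp0')
    have hε2 : ε < 1/2 := by nlinarith
    have hε0 : 0 < ε := by nlinarith
    calc ℙ (⋃ e : KEdge m, {ω | cycleMajority (Fc f ω) e.1.1 e.1.2 ≠ f e ω})
        ≤ ∑' e : KEdge m, ℙ {ω | cycleMajority (Fc f ω) e.1.1 e.1.2 ≠ f e ω} :=
          measure_iUnion_le _
      _ ≤ ∑' e : KEdge m, ENNReal.ofReal (Real.exp (-2*ε^2*((m:ℝ)-2))) :=
          ENNReal.tsum_le_tsum (fun e =>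
            per_edge hmeas hindep hp0'' hp hε hflip hm e.2)
      _ = (Fintype.card (KEdge m)) * ENNReal.ofReal (Real.exp (-2*ε^2*((m:ℝ)-2))) := by
          rw [tsum_fintype]
          simp [Finset.sum_const, nsmul_eq_mul, Finset.card_univ]
      _ ≤ ENNReal.ofReal (2 * m ^ 2 * Real.exp (-2 * ε ^ 2 * m)) := by
          have hcast : ((Fintype.card (KEdge m) : ENNReal))
              = ENNReal.ofReal ((Fintype.card (KEdge m) : ℝ)) := by
            rw [ENNReal.ofReal_natCast]
          rw [hcast]
          rw [← ENNReal.ofReal_mul (by positivity)]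
          refine ENNReal.ofReal_le_ofReal ?_
          have hK : (Fintype.card (KEdge m) : ℝ) ≤ (m:ℝ) * m / 2 := by
            have h1 := card_KEdge_le (m := m)
            have h2 : (2 * Fintype.card (KEdge m) : ℝ) ≤ (m:ℝ) * m := by
              exact_mod_cast h1
            linarith
          have hsplit : Real.exp (-2*ε^2*((m:ℝ)-2))
              = Real.exp (4*ε^2) * Real.exp (-2 * ε ^ 2 * (m:ℝ)) := by
            rw [← Real.exp_add]
            congr 1
            ring
          have hexp3 : Real.exp (4*ε^2) ≤ 3 := by
            calc Real.exp (4*ε^2) ≤ Real.exp 1 := by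
                  rw [Real.exp_le_exp]; nlinarith
              _ ≤ 3 := by
                  have := Real.exp_one_lt_d9
                  linarith
          rw [hsplit]
          have hE : (0:ℝ) ≤ Real.exp (-2 * ε ^ 2 * (m:ℝ)) := (Real.exp_pos _).le
          have hKnn : (0:ℝ) ≤ (Fintype.card (KEdge m) : ℝ) := by positivity
          calc (Fintype.card (KEdge m) : ℝ)
                * (Real.exp (4*ε^2) * Real.exp (-2 * ε ^ 2 * (m:ℝ)))
              = ((Fintype.card (KEdge m) : ℝ) * Real.exp (4*ε^2))
                * Real.exp (-2 * ε ^ 2 * (m:ℝ)) := by ring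
            _ ≤ (((m:ℝ) * m / 2) * 3) * Real.exp (-2 * ε ^ 2 * (m:ℝ)) := by
                refine mul_le_mul_of_nonneg_right ?_ hE
                exact mul_le_mul hK hexp3 (Real.exp_pos _).le (by positivity)
            _ ≤ 2 * (m:ℝ) ^ 2 * Real.exp (-2 * ε ^ 2 * (m:ℝ)) := by
                refine mul_le_mul_of_nonneg_right ?_ hE
                nlinarith [sq_nonneg ((m:ℝ))]
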